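/- Let α ∈ ℝ and c ∈ ℝ with c ≠ 0. Define q_w(x,t) = c·(−64c²α²t² − 16c⁴t² − 32c²αxt + 16ic²t − 4c²x² + 3)·exp(−2i(2α²t − c²t + αx)) / (64α²c²t² + 16c⁴t² + 32αc²tx + 4c²x² + 1). Then the denominator equals 1 + 16c⁴t² + 4c²(x + 4αt)² and is strictly positive on ℝ², and q_w satisfies the focusing NLS equation i·∂t q_w + ∂x² q_w + 2 (q_w)² conj(q_w) = 0 at every (x,t) ∈ ℝ². -/

import Mathlib

open Complex

/-- Partial derivative in `x` of a function of `(x,t)`. -/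
noncomputable def pX (f : ℝ → ℝ → ℂ) : ℝ → ℝ → ℂ := fun x t => deriv (fun x' => f x' t) x

/-- Partial derivative in `t` of a function of `(x,t)`. -/
noncomputable def pT (f : ℝ → ℝ → ℂ) : ℝ → ℝ → ℂ := fun x t => deriv (fun t' => f x t') t

/-- The rogue wave
`q_w(x,t) = c(−64c²α²t² − 16c⁴t² − 32c²αxt + 16ic²t − 4c²x² + 3) e^{−2i(2α²t − c²t + αx)}
  / (64α²c²t² + 16c⁴t² + 32αc²tx + 4c²x² + 1)`. -/
noncomputable def rogueWave (α c : ℝ) : ℝ → ℝ → ℂ := fun x t =>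
  (c : ℂ) * (-64 * (c : ℂ) ^ 2 * (α : ℂ) ^ 2 * (t : ℂ) ^ 2 - 16 * (c : ℂ) ^ 4 * (t : ℂ) ^ 2
      - 32 * (c : ℂ) ^ 2 * (α : ℂ) * (x : ℂ) * (t : ℂ) + 16 * I * (c : ℂ) ^ 2 * (t : ℂ)
      - 4 * (c : ℂ) ^ 2 * (x : ℂ) ^ 2 + 3)
    * Complex.exp (-2 * I * ((2 * α ^ 2 * t - c ^ 2 * t + α * x : ℝ) : ℂ))
    / ((64 * α ^ 2 * c ^ 2 * t ^ 2 + 16 * c ^ 4 * t ^ 2 + 32 * α * c ^ 2 * t * x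
        + 4 * c ^ 2 * x ^ 2 + 1 : ℝ) : ℂ)

namespace RW14

/-- Numerator polynomial of the rogue wave. -/
noncomputable def NN (A C z w : ℂ) : ℂ :=
  C * (-64 * C ^ 2 * A ^ 2 * w ^ 2 - 16 * C ^ 4 * w ^ 2 - 32 * C ^ 2 * A * z * w
    + 16 * I * C ^ 2 * w - 4 * C ^ 2 * z ^ 2 + 3)

/-- Conjugate numerator polynomial. -/
noncomputable def NB (A C z w : ℂ) : ℂ :=
  C * (-64 * C ^ 2 * A ^ 2 * w ^ 2 - 16 * C ^ 4 * w ^ 2 - 32 * C ^ 2 * A * z * w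
    - 16 * I * C ^ 2 * w - 4 * C ^ 2 * z ^ 2 + 3)

/-- Denominator polynomial. -/
noncomputable def DD (A C z w : ℂ) : ℂ :=
  64 * A ^ 2 * C ^ 2 * w ^ 2 + 16 * C ^ 4 * w ^ 2 + 32 * A * C ^ 2 * w * z
    + 4 * C ^ 2 * z ^ 2 + 1

/-- Exponential factor. -/
noncomputable def EE (A C z w : ℂ) : ℂ :=
  Complex.exp (-2 * I * (2 * A ^ 2 * w - C ^ 2 * w + A * z))

/-- `z`-derivative of `NN`. -/
noncomputable def NX (A C z w : ℂ) : ℂ := C * (-32 * C ^ 2 * A * w - 8 * C ^ 2 * z)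

/-- `w`-derivative of `NN`. -/
noncomputable def NW (A C z w : ℂ) : ℂ :=
  C * (-128 * C ^ 2 * A ^ 2 * w - 32 * C ^ 4 * w - 32 * C ^ 2 * A * z + 16 * I * C ^ 2)

/-- `z`-derivative of `DD`. -/
noncomputable def DX (A C z w : ℂ) : ℂ := 32 * A * C ^ 2 * w + 8 * C ^ 2 * z

/-- `w`-derivative of `DD`. -/
noncomputable def DW (A C z w : ℂ) : ℂ :=
  128 * A ^ 2 * C ^ 2 * w + 32 * C ^ 4 * w + 32 * A * C ^ 2 * z

/-- logarithmic `z`-derivative of `EE`. -/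
noncomputable def KZ (A : ℂ) : ℂ := -2 * I * A

/-- logarithmic `w`-derivative of `EE`. -/
noncomputable def KW (A C : ℂ) : ℂ := -2 * I * (2 * A ^ 2 - C ^ 2)

/-- Numerator of `∂ₓ q` (over `DD²`). -/
noncomputable def Q1 (A C z w : ℂ) : ℂ :=
  (NX A C z w + KZ A * NN A C z w) * DD A C z w - NN A C z w * DX A C z w

/-- `z`-derivative of `Q1`. -/
noncomputable def Q1X (A C z w : ℂ) : ℂ :=
  (C * (-8 * C ^ 2) + KZ A * NX A C z w) * DD A C z w
    + (NX A C z w + KZ A * NN A C z w) * DX A C z w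
    - (NX A C z w * DX A C z w + NN A C z w * (8 * C ^ 2))

/-- Numerator of `∂ₓ² q` (over `DD⁴`). -/
noncomputable def Q2 (A C z w : ℂ) : ℂ :=
  (Q1X A C z w + KZ A * Q1 A C z w) * (DD A C z w) ^ 2
    - Q1 A C z w * (2 * DD A C z w * DX A C z w)

/-- Numerator of `∂ₜ q` (over `DD²`). -/
noncomputable def QT (A C z w : ℂ) : ℂ :=
  (NW A C z w + KW A C * NN A C z w) * DD A C z w - NN A C z w * DW A C z w

lemma hd_congr {f g : ℂ → ℂ} {v v' z : ℂ} (h : HasDerivAt f v z)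
    (h1 : ∀ y, g y = f y) (h2 : v' = v) : HasDerivAt g v' z := by
  have hg : g = f := funext h1
  rw [hg, h2]; exact h

lemma hd_quad (a b d z : ℂ) :
    HasDerivAt (fun z : ℂ => a * z ^ 2 + b * z + d) (2 * a * z + b) z := by
  have h := (((hasDerivAt_pow 2 z).const_mul a).add ((hasDerivAt_id z).const_mul b)).add_const d
  refine hd_congr h (fun y => by simp only [id_eq, Pi.add_apply]) ?_
  push_cast; ring

lemma hd_lin (b d z : ℂ) : HasDerivAt (fun z : ℂ => b * z + d) b z := by
  have h := ((hasDerivAt_id z).const_mul b).add_const d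
  refine hd_congr h (fun y => by simp only [id_eq]) (by norm_num)

lemma dNN_z (A C w z : ℂ) : HasDerivAt (fun z => NN A C z w) (NX A C z w) z := by
  refine hd_congr (hd_quad (C * (-4 * C ^ 2)) (C * (-32 * C ^ 2 * A * w))
    (C * (-64 * C ^ 2 * A ^ 2 * w ^ 2 - 16 * C ^ 4 * w ^ 2 + 16 * I * C ^ 2 * w + 3)) z)
    (fun y => by simp only [NN]; ring) (by simp only [NX]; ring)

lemma dNN_w (A C z w : ℂ) : HasDerivAt (fun w => NN A C z w) (NW A C z w) w := by
  refine hd_congr (hd_quad (C * (-64 * C ^ 2 * A ^ 2 - 16 * C ^ 4))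
    (C * (-32 * C ^ 2 * A * z + 16 * I * C ^ 2)) (C * (-4 * C ^ 2 * z ^ 2 + 3)) w)
    (fun y => by simp only [NN]; ring) (by simp only [NW]; ring)

lemma dDD_z (A C w z : ℂ) : HasDerivAt (fun z => DD A C z w) (DX A C z w) z := by
  refine hd_congr (hd_quad (4 * C ^ 2) (32 * A * C ^ 2 * w)
    (64 * A ^ 2 * C ^ 2 * w ^ 2 + 16 * C ^ 4 * w ^ 2 + 1) z)
    (fun y => by simp only [DD]; ring) (by simp only [DX]; ring)

lemma dDD_w (A C z w : ℂ) : HasDerivAt (fun w => DD A C z w) (DW A C z w) w := by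
  refine hd_congr (hd_quad (64 * A ^ 2 * C ^ 2 + 16 * C ^ 4) (32 * A * C ^ 2 * z)
    (4 * C ^ 2 * z ^ 2 + 1) w)
    (fun y => by simp only [DD]; ring) (by simp only [DW]; ring)

lemma dNX_z (A C w z : ℂ) : HasDerivAt (fun z => NX A C z w) (C * (-8 * C ^ 2)) z := by
  refine hd_congr (hd_lin (C * (-8 * C ^ 2)) (C * (-32 * C ^ 2 * A * w)) z)
    (fun y => by simp only [NX]; ring) rfl

lemma dDX_z (A C w z : ℂ) : HasDerivAt (fun z => DX A C z w) (8 * C ^ 2) z := by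
  refine hd_congr (hd_lin (8 * C ^ 2) (32 * A * C ^ 2 * w) z)
    (fun y => by simp only [DX]; ring) rfl

lemma dEE_z (A C w z : ℂ) : HasDerivAt (fun z => EE A C z w) (KZ A * EE A C z w) z := by
  have h := (hd_lin (-2 * I * A) (-2 * I * (2 * A ^ 2 * w - C ^ 2 * w)) z).cexp
  refine hd_congr h (fun y => by simp only [EE]; congr 1; ring) ?_
  simp only [EE, KZ]
  rw [show -2 * I * A * z + -2 * I * (2 * A ^ 2 * w - C ^ 2 * w)
    = -2 * I * (2 * A ^ 2 * w - C ^ 2 * w + A * z) by ring]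
  ring

lemma dEE_w (A C z w : ℂ) : HasDerivAt (fun w => EE A C z w) (KW A C * EE A C z w) w := by
  have h := (hd_lin (-2 * I * (2 * A ^ 2 - C ^ 2)) (-2 * I * (A * z)) w).cexp
  refine hd_congr h (fun y => by simp only [EE]; congr 1; ring) ?_
  simp only [EE, KW]
  rw [show -2 * I * (2 * A ^ 2 - C ^ 2) * w + -2 * I * (A * z)
    = -2 * I * (2 * A ^ 2 * w - C ^ 2 * w + A * z) by ring]
  ring

lemma dQ1_z (A C w z : ℂ) : HasDerivAt (fun z => Q1 A C z w) (Q1X A C z w) z := by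
  have h := (((dNX_z A C w z).add ((dNN_z A C w z).const_mul (KZ A))).mul
    (dDD_z A C w z)).sub ((dNN_z A C w z).mul (dDX_z A C w z))
  refine hd_congr h (fun y => by simp only [Q1, Pi.add_apply, Pi.mul_apply, Pi.sub_apply]) (by simp only [Q1X, Pi.add_apply]; try ring)

set_option maxHeartbeats 4000000 in
set_option maxRecDepth 100000 in
/-- The key algebraic identity encapsulating the NLS equation. -/
lemma key (A C z w : ℂ) :
    I * QT A C z w * (DD A C z w) ^ 2 + Q2 A C z w
      + 2 * (NN A C z w) ^ 2 * NB A C z w * DD A C z w = 0 := by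
  have h2 : (I : ℂ) ^ 2 = -1 := Complex.I_sq
  have h3 : (I : ℂ) ^ 3 = -I := by rw [pow_succ, h2]; ring
  have h4 : (I : ℂ) ^ 4 = 1 := by rw [pow_succ, h3]; simp
  simp only [QT, Q2, Q1X, Q1, NN, NB, DD, NX, NW, DX, DW, KZ, KW]
  ring_nf
  simp only [h2, h3, h4]
  ring

lemma combine (Kt K2 Kn Kb d e : ℂ) (hd : d ≠ 0) (he : e ≠ 0)
    (hkey : I * Kt * d ^ 2 + K2 + 2 * Kn ^ 2 * Kb * d = 0) :
    I * (Kt * e / d ^ 2) + K2 * e / d ^ 4 + 2 * (Kn * e / d) ^ 2 * (Kb * e⁻¹ / d) = 0 := by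
  have h : I * (Kt * e / d ^ 2) + K2 * e / d ^ 4 + 2 * (Kn * e / d) ^ 2 * (Kb * e⁻¹ / d)
      = (I * Kt * d ^ 2 + K2 + 2 * Kn ^ 2 * Kb * d) * e / d ^ 4 := by
    field_simp
  rw [h, hkey, zero_mul, zero_div]

lemma den_pos (α c : ℝ) (hc : c ≠ 0) (x t : ℝ) :
    0 < (64 * α ^ 2 * c ^ 2 * t ^ 2 + 16 * c ^ 4 * t ^ 2 + 32 * α * c ^ 2 * t * x
      + 4 * c ^ 2 * x ^ 2 + 1 : ℝ) := by
  have h : (64 * α ^ 2 * c ^ 2 * t ^ 2 + 16 * c ^ 4 * t ^ 2 + 32 * α * c ^ 2 * t * x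
      + 4 * c ^ 2 * x ^ 2 + 1 : ℝ) = 1 + 16 * (c ^ 2 * t) ^ 2 + 4 * (c * (x + 4 * α * t)) ^ 2 := by
    ring
  rw [h]
  positivity

lemma DD_cast (α c x t : ℝ) :
    DD (α : ℂ) (c : ℂ) (x : ℂ) (t : ℂ)
      = ((64 * α ^ 2 * c ^ 2 * t ^ 2 + 16 * c ^ 4 * t ^ 2 + 32 * α * c ^ 2 * t * x
        + 4 * c ^ 2 * x ^ 2 + 1 : ℝ) : ℂ) := by
  simp only [DD]
  push_cast
  ring

lemma DD_ne (α c : ℝ) (hc : c ≠ 0) (x t : ℝ) :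
    DD (α : ℂ) (c : ℂ) (x : ℂ) (t : ℂ) ≠ 0 := by
  rw [DD_cast]
  exact_mod_cast (den_pos α c hc x t).ne'

lemma EE_ne (α c x t : ℝ) : EE (α : ℂ) (c : ℂ) (x : ℂ) (t : ℂ) ≠ 0 :=
  Complex.exp_ne_zero _

lemma rw_eq (α c x t : ℝ) :
    rogueWave α c x t
      = NN (α : ℂ) (c : ℂ) (x : ℂ) (t : ℂ) * EE (α : ℂ) (c : ℂ) (x : ℂ) (t : ℂ)
        / DD (α : ℂ) (c : ℂ) (x : ℂ) (t : ℂ) := by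
  simp only [rogueWave, NN, EE, DD]
  rw [show ((2 * α ^ 2 * t - c ^ 2 * t + α * x : ℝ) : ℂ)
    = 2 * (α : ℂ) ^ 2 * (t : ℂ) - (c : ℂ) ^ 2 * (t : ℂ) + (α : ℂ) * (x : ℂ) by push_cast; ring]
  push_cast
  ring

lemma pX_eq (α c : ℝ) (hc : c ≠ 0) (x t : ℝ) :
    pX (rogueWave α c) x t
      = Q1 (α : ℂ) (c : ℂ) (x : ℂ) (t : ℂ) * EE (α : ℂ) (c : ℂ) (x : ℂ) (t : ℂ)
        / (DD (α : ℂ) (c : ℂ) (x : ℂ) (t : ℂ)) ^ 2 := by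
  have H := (((dNN_z (α : ℂ) (c : ℂ) (t : ℂ) (x : ℂ)).mul
    (dEE_z (α : ℂ) (c : ℂ) (t : ℂ) (x : ℂ))).div (dDD_z (α : ℂ) (c : ℂ) (t : ℂ) (x : ℂ))
    (DD_ne α c hc x t)).comp_ofReal
  have hfun : (fun x' : ℝ => rogueWave α c x' t)
      = fun x' : ℝ => NN (α : ℂ) (c : ℂ) (x' : ℂ) (t : ℂ) * EE (α : ℂ) (c : ℂ) (x' : ℂ) (t : ℂ)
        / DD (α : ℂ) (c : ℂ) (x' : ℂ) (t : ℂ) := funext fun x' => rw_eq α c x' t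
  simp only [pX]
  rw [hfun]
  simp only [Pi.mul_apply, Pi.div_apply, Pi.pow_apply] at H
  rw [H.deriv]
  simp only [Q1]
  ring

lemma pT_eq (α c : ℝ) (hc : c ≠ 0) (x t : ℝ) :
    pT (rogueWave α c) x t
      = QT (α : ℂ) (c : ℂ) (x : ℂ) (t : ℂ) * EE (α : ℂ) (c : ℂ) (x : ℂ) (t : ℂ)
        / (DD (α : ℂ) (c : ℂ) (x : ℂ) (t : ℂ)) ^ 2 := by
  have H := (((dNN_w (α : ℂ) (c : ℂ) (x : ℂ) (t : ℂ)).mul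
    (dEE_w (α : ℂ) (c : ℂ) (x : ℂ) (t : ℂ))).div (dDD_w (α : ℂ) (c : ℂ) (x : ℂ) (t : ℂ))
    (DD_ne α c hc x t)).comp_ofReal
  have hfun : (fun t' : ℝ => rogueWave α c x t')
      = fun t' : ℝ => NN (α : ℂ) (c : ℂ) (x : ℂ) (t' : ℂ) * EE (α : ℂ) (c : ℂ) (x : ℂ) (t' : ℂ)
        / DD (α : ℂ) (c : ℂ) (x : ℂ) (t' : ℂ) := funext fun t' => rw_eq α c x t'
  simp only [pT]
  rw [hfun]
  simp only [Pi.mul_apply, Pi.div_apply, Pi.pow_apply] at H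
  rw [H.deriv]
  simp only [QT]
  ring

lemma pXX_eq (α c : ℝ) (hc : c ≠ 0) (x t : ℝ) :
    pX (pX (rogueWave α c)) x t
      = Q2 (α : ℂ) (c : ℂ) (x : ℂ) (t : ℂ) * EE (α : ℂ) (c : ℂ) (x : ℂ) (t : ℂ)
        / (DD (α : ℂ) (c : ℂ) (x : ℂ) (t : ℂ)) ^ 4 := by
  have H := (((dQ1_z (α : ℂ) (c : ℂ) (t : ℂ) (x : ℂ)).mul
    (dEE_z (α : ℂ) (c : ℂ) (t : ℂ) (x : ℂ))).div
    ((dDD_z (α : ℂ) (c : ℂ) (t : ℂ) (x : ℂ)).pow 2)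
    (pow_ne_zero 2 (DD_ne α c hc x t))).comp_ofReal
  have hfun : (fun x' : ℝ => pX (rogueWave α c) x' t)
      = fun x' : ℝ => Q1 (α : ℂ) (c : ℂ) (x' : ℂ) (t : ℂ) * EE (α : ℂ) (c : ℂ) (x' : ℂ) (t : ℂ)
        / (DD (α : ℂ) (c : ℂ) (x' : ℂ) (t : ℂ)) ^ 2 := funext fun x' => pX_eq α c hc x' t
  have hstart : pX (pX (rogueWave α c)) x t
      = deriv (fun x' : ℝ => pX (rogueWave α c) x' t) x := rfl
  rw [hstart, hfun]
  simp only [Pi.mul_apply, Pi.div_apply, Pi.pow_apply] at H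
  rw [H.deriv]
  simp only [Q2]
  norm_num
  ring

lemma conj_NN (α c x t : ℝ) :
    (starRingEnd ℂ) (NN (α : ℂ) (c : ℂ) (x : ℂ) (t : ℂ))
      = NB (α : ℂ) (c : ℂ) (x : ℂ) (t : ℂ) := by
  simp only [NN, NB, map_mul, map_add, map_sub, map_neg, map_pow, map_ofNat,
    Complex.conj_ofReal, Complex.conj_I]
  ring

lemma conj_DD (α c x t : ℝ) :
    (starRingEnd ℂ) (DD (α : ℂ) (c : ℂ) (x : ℂ) (t : ℂ))
      = DD (α : ℂ) (c : ℂ) (x : ℂ) (t : ℂ) := by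
  rw [DD_cast, Complex.conj_ofReal]

lemma conj_EE (α c x t : ℝ) :
    (starRingEnd ℂ) (EE (α : ℂ) (c : ℂ) (x : ℂ) (t : ℂ))
      = (EE (α : ℂ) (c : ℂ) (x : ℂ) (t : ℂ))⁻¹ := by
  simp only [EE, ← Complex.exp_conj, ← Complex.exp_neg]
  congr 1
  simp only [map_mul, map_add, map_sub, map_neg, map_pow, map_ofNat,
    Complex.conj_ofReal, Complex.conj_I]
  ring

end RW14

/-- the denominator of the rogue wave equals `1 + 16c⁴t² + 4c²(x + 4αt)²`,
hence is strictly positive, and `q_w` satisfies the focusing NLS equation. -/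
theorem statement14 (α c : ℝ) (hc : c ≠ 0) :
    (∀ x t : ℝ,
      (64 * α ^ 2 * c ^ 2 * t ^ 2 + 16 * c ^ 4 * t ^ 2 + 32 * α * c ^ 2 * t * x
          + 4 * c ^ 2 * x ^ 2 + 1 : ℝ)
        = 1 + 16 * c ^ 4 * t ^ 2 + 4 * c ^ 2 * (x + 4 * α * t) ^ 2
      ∧ 0 < (64 * α ^ 2 * c ^ 2 * t ^ 2 + 16 * c ^ 4 * t ^ 2 + 32 * α * c ^ 2 * t * x
          + 4 * c ^ 2 * x ^ 2 + 1 : ℝ))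
    ∧ (∀ x t : ℝ,
      I * pT (rogueWave α c) x t + pX (pX (rogueWave α c)) x t
        + 2 * (rogueWave α c x t) ^ 2 * (starRingEnd ℂ) (rogueWave α c x t) = 0) := by
  constructor
  · intro x t
    exact ⟨by ring, RW14.den_pos α c hc x t⟩
  · intro x t
    rw [RW14.pT_eq α c hc x t, RW14.pXX_eq α c hc x t, RW14.rw_eq α c x t,
      map_div₀, map_mul, RW14.conj_NN, RW14.conj_DD, RW14.conj_EE]
    exact RW14.combine _ _ _ _ _ _ (RW14.DD_ne α c hc x t) (RW14.EE_ne α c x t)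
      (RW14.key (α : ℂ) (c : ℂ) (x : ℂ) (t : ℂ))
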